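/- Let X be a real random variable such that G_X(α, 0) < ∞ for all α in some open interval containing 1, and let n ∈ ℕ. Then the function α ↦ G_X(α, 0) is n times differentiable at α = 1 and 𝒞ℰ_n(X) = ((−1)^n / n!) · (∂^n/∂α^n) G_X(α, 0)|_{α=1}. -/

import Mathlib

open MeasureTheory ProbabilityTheory Set

/-- The (essential) support interval of a CDF `F`: the set where `0 < F x < 1`,
which coincides (up to endpoints) with the interval `(l, r)` where
`l = inf {x : F x > 0}` and `r = sup {x : 1 - F x > 0}`. -/
def cigfSupport (F : ℝ → ℝ) : Set ℝ := {x | 0 < F x ∧ F x < 1}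

/-- The cumulative information generating function
`G_X(α, β) = ∫_l^r F(x)^α (1 - F(x))^β dx`. -/
noncomputable def cigf (F : ℝ → ℝ) (α β : ℝ) : ℝ :=
  ∫ x in cigfSupport F, F x ^ α * (1 - F x) ^ β

/-- `(α, β) ∈ D_X`, i.e. `G_X(α, β) < ∞`. -/
def memD (F : ℝ → ℝ) (α β : ℝ) : Prop :=
  IntegrableOn (fun x => F x ^ α * (1 - F x) ^ β) (cigfSupport F)

/-- The CDF of a random variable `X` under the probability measure `P`. -/
noncomputable def rvCDF {Ω : Type*} [MeasurableSpace Ω] (P : Measure Ω) (X : Ω → ℝ) (x : ℝ) : ℝ :=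
  (P {ω | X ω ≤ x}).toReal

/-- The CDF of a probability measure on `ℝ`. -/
noncomputable def cdfOf (μ : Measure ℝ) (x : ℝ) : ℝ := (μ (Iic x)).toReal

-- auxiliary bound : t^δ * |log t|^m ≤ m!/δ^m for 0 < t ≤ 1, δ > 0
lemma aux_bound (m : ℕ) {δ t : ℝ} (hδ : 0 < δ) (ht : 0 < t) (ht1 : t ≤ 1) :
    t ^ δ * |Real.log t| ^ m ≤ m.factorial / δ ^ m := by
  set s : ℝ := -Real.log t with hs
  have hs0 : 0 ≤ s := by
    have := Real.log_nonpos ht.le ht1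
    simp [hs]; linarith
  have habs : |Real.log t| = s := by
    rw [abs_of_nonpos (Real.log_nonpos ht.le ht1)]
  have htδ : t ^ δ = Real.exp (-(δ * s)) := by
    rw [Real.rpow_def_of_pos ht]
    ring_nf
    congr 1; rw [hs]; ring
  have key : (δ * s) ^ m / m.factorial ≤ Real.exp (δ * s) :=
    Real.pow_div_factorial_le_exp (x := δ * s) (mul_nonneg hδ.le hs0) m
  have hfac : (0:ℝ) < m.factorial := by positivity
  have h1 : δ ^ m * s ^ m ≤ m.factorial * Real.exp (δ * s) := by
    rw [mul_pow] at key
    rw [div_le_iff₀ hfac] at key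
    linarith [key]
  have hexp := Real.exp_pos (δ * s)
  have h2 : s ^ m ≤ (m.factorial : ℝ) / δ ^ m * Real.exp (δ * s) := by
    rw [div_mul_eq_mul_div, le_div_iff₀ (by positivity)]
    nlinarith [h1]
  rw [habs, htδ, Real.exp_neg]
  calc (Real.exp (δ * s))⁻¹ * s ^ m
      ≤ (Real.exp (δ * s))⁻¹ * ((m.factorial : ℝ) / δ ^ m * Real.exp (δ * s)) :=
        mul_le_mul_of_nonneg_left h2 (by positivity)
    _ = m.factorial / δ ^ m := by field_simp

lemma measurable_myrpow {F : ℝ → ℝ} (hFm : Measurable F) (hF0 : ∀ x, 0 ≤ F x) (c : ℝ) :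
    Measurable fun x => F x ^ c := by
  have heq : (fun x => F x ^ c)
      = fun x => if F x = 0 then (if c = 0 then 1 else 0) else Real.exp (Real.log (F x) * c) := by
    funext x
    rw [Real.rpow_def_of_nonneg (hF0 x)]
  rw [heq]
  exact Measurable.ite (hFm (measurableSet_singleton 0)) measurable_const
    (Real.measurable_exp.comp ((Real.measurable_log.comp hFm).mul_const c))

lemma measurableSet_cigfSupport {F : ℝ → ℝ} (hFm : Measurable F) : MeasurableSet (cigfSupport F) :=
  (hFm measurableSet_Ioo : MeasurableSet (F ⁻¹' (Ioo 0 1)))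

-- integrability of F^α * (log F)^k on S for α > a'
lemma Hint {F : ℝ → ℝ} (hFm : Measurable F) (hF0 : ∀ x, 0 ≤ F x) {a' : ℝ}
    (hint : IntegrableOn (fun x => F x ^ a') (cigfSupport F)) (k : ℕ) {α : ℝ} (hα : a' < α) :
    IntegrableOn (fun x => F x ^ α * Real.log (F x) ^ k) (cigfSupport F) := by
  set δ := α - a' with hδdef
  have hδ : 0 < δ := by simp [hδdef]; linarith
  have hS := measurableSet_cigfSupport hFm
  apply Integrable.mono' (g := fun x => (k.factorial / δ ^ k) * F x ^ a')
  · exact hint.const_mul _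
  · exact ((measurable_myrpow hFm hF0 _).mul ((hFm.log).pow measurable_const)).aestronglyMeasurable
  · rw [ae_restrict_iff' hS]
    refine ae_of_all _ fun x hx => ?_
    obtain ⟨h0, h1⟩ := hx
    have hα' : F x ^ α = F x ^ a' * F x ^ δ := by
      rw [← Real.rpow_add h0]; ring_nf
      congr 1; rw [hδdef]; ring
    rw [norm_mul, Real.norm_eq_abs, Real.norm_eq_abs,
      abs_of_nonneg (Real.rpow_nonneg h0.le _), abs_pow, hα']
    calc F x ^ a' * F x ^ δ * |Real.log (F x)| ^ k
        = F x ^ a' * (F x ^ δ * |Real.log (F x)| ^ k) := by ring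
      _ ≤ F x ^ a' * (k.factorial / δ ^ k) :=
          mul_le_mul_of_nonneg_left (aux_bound k hδ h0 h1.le) (Real.rpow_nonneg h0.le _)
      _ = (k.factorial / δ ^ k) * F x ^ a' := by ring

-- the derivative of H k is H (k+1)
lemma Hderiv {F : ℝ → ℝ} (hFm : Measurable F) (hF0 : ∀ x, 0 ≤ F x) {a' : ℝ}
    (hint : IntegrableOn (fun x => F x ^ a') (cigfSupport F)) (k : ℕ) {α : ℝ} (hα : a' < α) :
    HasDerivAt (fun β => ∫ x in cigfSupport F, F x ^ β * Real.log (F x) ^ k)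
      (∫ x in cigfSupport F, F x ^ α * Real.log (F x) ^ (k + 1)) α := by
  have hS := measurableSet_cigfSupport hFm
  set ε := (α - a') / 2 with hεdef
  have hε : 0 < ε := by simp [hεdef]; linarith
  have key := hasDerivAt_integral_of_dominated_loc_of_deriv_le (μ := volume.restrict (cigfSupport F))
    (F := fun β x => F x ^ β * Real.log (F x) ^ k)
    (F' := fun β x => F x ^ β * Real.log (F x) ^ (k + 1))
    (x₀ := α) (bound := fun x => ((k+1).factorial / ε ^ (k+1)) * F x ^ a')
    (Metric.ball_mem_nhds α hε)
    (Filter.Eventually.of_forall fun β =>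
      ((measurable_myrpow hFm hF0 _).mul ((hFm.log).pow measurable_const)).aestronglyMeasurable)
    (Hint hFm hF0 hint k hα)
    ((measurable_myrpow hFm hF0 _).mul ((hFm.log).pow measurable_const)).aestronglyMeasurable
    ?_ ((hint.const_mul _))
    ?_
  · exact key.2
  · rw [ae_restrict_iff' hS]
    refine ae_of_all _ fun x hx β hβ => ?_
    obtain ⟨h0, h1⟩ := hx
    have hβ' : a' + ε ≤ β := by
      rw [Metric.mem_ball, Real.dist_eq, abs_lt] at hβ
      simp [hεdef] at hβ ⊢; linarith [hβ.1]
    have hmono : F x ^ β ≤ F x ^ (a' + ε) :=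
      Real.rpow_le_rpow_of_exponent_ge h0 h1.le hβ'
    have hsplit : F x ^ (a' + ε) = F x ^ a' * F x ^ ε := Real.rpow_add h0 _ _
    rw [norm_mul, Real.norm_eq_abs, Real.norm_eq_abs,
      abs_of_nonneg (Real.rpow_nonneg h0.le _), abs_pow]
    calc F x ^ β * |Real.log (F x)| ^ (k+1)
        ≤ F x ^ (a' + ε) * |Real.log (F x)| ^ (k+1) :=
          mul_le_mul_of_nonneg_right hmono (by positivity)
      _ = F x ^ a' * (F x ^ ε * |Real.log (F x)| ^ (k+1)) := by rw [hsplit]; ring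
      _ ≤ F x ^ a' * ((k+1).factorial / ε ^ (k+1)) :=
          mul_le_mul_of_nonneg_left (aux_bound (k+1) hε h0 h1.le) (Real.rpow_nonneg h0.le _)
      _ = ((k+1).factorial / ε ^ (k+1)) * F x ^ a' := by ring
  · rw [ae_restrict_iff' hS]
    refine ae_of_all _ fun x hx β _ => ?_
    obtain ⟨h0, _⟩ := hx
    have hd : HasDerivAt (fun β => F x ^ β) (F x ^ β * Real.log (F x)) β :=
      (Real.hasStrictDerivAt_const_rpow h0 β).hasDerivAt
    have := hd.mul_const (Real.log (F x) ^ k)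
    convert this using 1
    · rfl
    · ring


/-- If `G_X(α, 0) < ∞` for all `α` in an open interval containing `1`, then
`α ↦ G_X(α, 0)` is `n` times differentiable at `α = 1` and
`𝒞ℰ_n(X) = ((-1)^n / n!) ∂^n/∂α^n G_X(α, 0) |_{α=1}` for `n ∈ ℕ`, `n ≥ 1`. -/
theorem stmt7 {Ω : Type*} [MeasurableSpace Ω] (P : Measure Ω) [IsProbabilityMeasure P]
    (X : Ω → ℝ) (hX : Measurable X) (n : ℕ) (hn : 0 < n)
    (a b : ℝ) (ha : a < 1) (hb : 1 < b)
    (hfin : ∀ α ∈ Ioo a b, memD (rvCDF P X) α 0) :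
    ContDiffAt ℝ n (fun α => cigf (rvCDF P X) α 0) 1 ∧
    (n.factorial : ℝ)⁻¹ *
        ∫ x in cigfSupport (rvCDF P X),
          rvCDF P X x * (-Real.log (rvCDF P X x)) ^ n =
      ((-1 : ℝ) ^ n / (n.factorial : ℝ)) *
        iteratedDeriv n (fun α => cigf (rvCDF P X) α 0) 1 := by
  set F := rvCDF P X with hF
  -- F is measurable (monotone)
  have hFmono : Monotone F := by
    intro x y hxy
    refine ENNReal.toReal_mono (measure_ne_top _ _) (measure_mono fun ω hω => le_trans hω hxy)
  have hFm : Measurable F := hFmono.measurable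
  have hF0 : ∀ x, 0 ≤ F x := fun x => ENNReal.toReal_nonneg
  set a' : ℝ := (a + 1) / 2 with ha'def
  have ha'1 : a' < 1 := by simp [ha'def]; linarith
  have ha'a : a < a' := by simp [ha'def]; linarith
  have hint : IntegrableOn (fun x => F x ^ a') (cigfSupport F) := by
    have := hfin a' ⟨ha'a, by linarith⟩
    unfold memD at this
    have heq : (fun x => F x ^ a' * (1 - F x) ^ (0:ℝ)) = fun x => F x ^ a' := by
      funext x; rw [Real.rpow_zero, mul_one]
    rwa [heq] at this
  set H : ℕ → ℝ → ℝ := fun k α => ∫ x in cigfSupport F, F x ^ α * Real.log (F x) ^ k with hH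
  have hG : (fun α => cigf F α 0) = H 0 := by
    funext α
    unfold cigf
    simp [hH]
  -- ContDiffOn for all orders
  have hcd : ∀ (N : ℕ) (k : ℕ), ContDiffOn ℝ N (H k) (Ioi a') := by
    intro N
    induction N with
    | zero =>
      intro k
      rw [show ((0:ℕ):WithTop ℕ∞) = 0 from rfl, contDiffOn_zero]
      intro α hα
      exact ((Hderiv hFm hF0 hint k hα).continuousAt).continuousWithinAt
    | succ N ih =>
      intro k
      rw [show ((N+1:ℕ):WithTop ℕ∞) = (N:WithTop ℕ∞) + 1 by push_cast; ring,
        contDiffOn_succ_iff_deriv_of_isOpen isOpen_Ioi]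
      refine ⟨fun α hα => ((Hderiv hFm hF0 hint k hα).differentiableAt).differentiableWithinAt, ?_, ?_⟩
      · intro h; simp at h
      · apply (ih (k+1)).congr
        intro α hα
        exact (Hderiv hFm hF0 hint k hα).deriv
  have h1mem : (1:ℝ) ∈ Ioi a' := ha'1
  have hnhds : Ioi a' ∈ nhds (1:ℝ) := isOpen_Ioi.mem_nhds h1mem
  constructor
  · rw [hG]
    exact (hcd n 0).contDiffAt hnhds
  · -- iterated derivative identification
    have hiter : ∀ (k : ℕ), ∀ α ∈ Ioi a', iteratedDeriv k (H 0) α = H k α := by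
      intro k
      induction k with
      | zero => intro α _; simp
      | succ k ih =>
        intro α hα
        rw [iteratedDeriv_succ]
        have heq : (iteratedDeriv k (H 0)) =ᶠ[nhds α] H k := by
          filter_upwards [isOpen_Ioi.mem_nhds hα] with β hβ using ih β hβ
        rw [heq.deriv_eq]
        exact (Hderiv hFm hF0 hint k hα).deriv
    rw [hG, hiter n 1 h1mem]
    have hintegrand : ∀ x, F x * (-Real.log (F x)) ^ n
        = (-1:ℝ)^n * (F x ^ (1:ℝ) * Real.log (F x) ^ n) := by
      intro x
      rw [Real.rpow_one, neg_pow]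
      ring
    simp_rw [hintegrand]
    rw [integral_const_mul]
    unfold H
    ring
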